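/- Suppose n = |H| ≥ 3. Let T^g be the greedy query tree constructed for the rounded distribution π'. Then C(T^g, π) ≤ 108 · C* · ln( n · c_max / c_min ), where C* = min_T C(T, π) is the minimum cost over all query trees T whose leaves are H. In particular the approximation factor is independent of the distribution π. -/

import Mathlib

open Finset

namespace ActiveLearning

variable {H A : Type*} {m : ℕ}

/-- The total mass of a weight function `v` on a finite set `S`. -/
def mass (v : H → ℝ) (S : Finset H) : ℝ := ∑ s ∈ S, v s

/-- `v` restricted to `S` and normalized. -/
noncomputable def restrict [DecidableEq H] (v : H → ℝ) (S : Finset H) : H → ℝ :=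
  fun h => if h ∈ S then v h / mass v S else 0

/-- The shrinkage `Δ` of a question `qi` on `(S, v)`. -/
noncomputable def shrink [Fintype A] [DecidableEq A] (qi : H → A)
    (S : Finset H) (v : H → ℝ) : ℝ :=
  mass v S - ∑ j : A, (mass v (S.filter fun s => qi s = j)) ^ 2 / mass v S

/-- The collision probability of a distribution `v`. -/
def CP [Fintype H] (v : H → ℝ) : ℝ := ∑ z : H, (v z) ^ 2

/-- Query trees: internal nodes are questions (indexed by `Fin m`), branches are answers,
leaves are hypotheses. -/
inductive QTree (m : ℕ) (H A : Type*) : Type _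
  | leaf : H → QTree m H A
  | node : Fin m → (A → QTree m H A) → QTree m H A

/-- Follow the answers of hypothesis `h` down the tree, returning the leaf reached. -/
def follow (q : Fin m → H → A) : QTree m H A → H → H
  | .leaf h', _ => h'
  | .node i ch, h => follow q (ch (q i h)) h

/-- The cost `c_T(h)`: sum of costs of the questions on the root-to-`h` path. -/
def pathCost (q : Fin m → H → A) (c : Fin m → ℝ) : QTree m H A → H → ℝ
  | .leaf _, _ => 0
  | .node i ch, h => c i + pathCost q c (ch (q i h)) h

/-- The leaves of `T` include `S`: every `h ∈ S` is identified by `T`. -/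
def ValidOn (q : Fin m → H → A) (T : QTree m H A) (S : Finset H) : Prop :=
  ∀ h ∈ S, follow q T h = h

/-- The expected cost `C(T, v)` of a query tree `T` under weights `v`. -/
noncomputable def treeCost [Fintype H] (q : Fin m → H → A) (c : Fin m → ℝ)
    (T : QTree m H A) (v : H → ℝ) : ℝ :=
  ∑ h : H, v h * pathCost q c T h

/-- The questions asked along the root-to-`h` path. -/
def pathQs (q : Fin m → H → A) : QTree m H A → H → List (Fin m)
  | .leaf _, _ => []
  | .node i ch, h => i :: pathQs q (ch (q i h)) h

/-- `T` is a greedy query tree for `π` on version space `S`: at every node it asks a question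
maximizing the shrinkage-cost ratio and recurses on each nonempty answer class. -/
inductive IsGreedy [Fintype A] [DecidableEq A] [DecidableEq H]
    (q : Fin m → H → A) (c : Fin m → ℝ) (π : H → ℝ) :
    QTree m H A → Finset H → Prop
  | leaf (h : H) : IsGreedy q c π (.leaf h) {h}
  | node (S : Finset H) (i : Fin m) (ch : A → QTree m H A)
      (hcard : 1 < S.card)
      (hmax : ∀ j : Fin m,
        shrink (q j) S (restrict π S) / c j ≤ shrink (q i) S (restrict π S) / c i)
      (hch : ∀ a : A, (S.filter fun s => q i s = a).Nonempty →
        IsGreedy q c π (ch a) (S.filter fun s => q i s = a)) :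
      IsGreedy q c π (.node i ch) S

/-- `T` is an `ε`-approximate greedy query tree for `π` on version space `S`. -/
inductive IsApproxGreedy [Fintype A] [DecidableEq A] [DecidableEq H]
    (ε : ℝ) (q : Fin m → H → A) (c : Fin m → ℝ) (π : H → ℝ) :
    QTree m H A → Finset H → Prop
  | leaf (h : H) : IsApproxGreedy ε q c π (.leaf h) {h}
  | node (S : Finset H) (i : Fin m) (ch : A → QTree m H A)
      (hcard : 1 < S.card)
      (happrox : ∀ j : Fin m,
        (1 - ε) * (shrink (q j) S (restrict π S) / c j) ≤
          shrink (q i) S (restrict π S) / c i)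
      (hch : ∀ a : A, (S.filter fun s => q i s = a).Nonempty →
        IsApproxGreedy ε q c π (ch a) (S.filter fun s => q i s = a)) :
      IsApproxGreedy ε q c π (.node i ch) S

/-- `T` is irreducible on version space `S`: every asked question strictly splits the
surviving set. -/
inductive Irreducible [DecidableEq A] (q : Fin m → H → A) :
    QTree m H A → Finset H → Prop
  | leaf (h : H) (S : Finset H) : Irreducible q (.leaf h) S
  | node (S : Finset H) (i : Fin m) (ch : A → QTree m H A)
      (hsplit : ∃ s ∈ S, ∃ t ∈ S, q i s ≠ q i t)
      (hch : ∀ a : A, (S.filter fun s => q i s = a).Nonempty →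
        Irreducible q (ch a) (S.filter fun s => q i s = a)) :
      Irreducible q (.node i ch) S


section Aux

variable {H A : Type*} {m : ℕ}

/-- Unnormalized Gini impurity of `ν` on `S`. -/
noncomputable def gini (ν : H → ℝ) (S : Finset H) : ℝ := mass ν S ^ 2 - ∑ h ∈ S, ν h ^ 2

lemma mass_nonneg {ν : H → ℝ} (hν : ∀ h, 0 ≤ ν h) (S : Finset H) : 0 ≤ mass ν S :=
  Finset.sum_nonneg fun h _ => hν h

lemma mass_pos {ν : H → ℝ} (hν : ∀ h, 0 < ν h) {S : Finset H} (hS : S.Nonempty) :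
    0 < mass ν S :=
  Finset.sum_pos (fun h _ => hν h) hS

lemma mass_mono {ν : H → ℝ} (hν : ∀ h, 0 ≤ ν h) {V W : Finset H} (hVW : V ⊆ W) :
    mass ν V ≤ mass ν W :=
  Finset.sum_le_sum_of_subset_of_nonneg hVW (fun h _ _ => hν h)

lemma sum_sq_le_sq {ι : Type*} (s : Finset ι) (f : ι → ℝ) (hf : ∀ i ∈ s, 0 ≤ f i) :
    ∑ i ∈ s, f i ^ 2 ≤ (∑ i ∈ s, f i) ^ 2 := by
  calc ∑ i ∈ s, f i ^ 2 ≤ ∑ i ∈ s, f i * ∑ j ∈ s, f j := by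
        refine Finset.sum_le_sum fun i hi => ?_
        have h1 : f i ≤ ∑ j ∈ s, f j := Finset.single_le_sum hf hi
        nlinarith [hf i hi]
    _ = (∑ i ∈ s, f i) ^ 2 := by rw [← Finset.sum_mul]; ring

lemma gini_nonneg {ν : H → ℝ} (hν : ∀ h, 0 ≤ ν h) (S : Finset H) : 0 ≤ gini ν S :=
  sub_nonneg.2 (sum_sq_le_sq S ν fun h _ => hν h)

lemma gini_empty (ν : H → ℝ) : gini ν (∅ : Finset H) = 0 := by simp [gini, mass]

lemma gini_singleton (ν : H → ℝ) (h : H) : gini ν ({h} : Finset H) = 0 := by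
  simp [gini, mass]

section WithA
variable [Fintype A] [DecidableEq A] [DecidableEq H]

lemma mass_fiberwise (ν : H → ℝ) (qi : H → A) (S : Finset H) :
    ∑ a : A, mass ν (S.filter fun s => qi s = a) = mass ν S :=
  Finset.sum_fiberwise S qi ν

lemma shrink_empty (qi : H → A) (ν : H → ℝ) : shrink qi (∅ : Finset H) ν = 0 := by
  simp [shrink, mass]

lemma shrink_nonneg {ν : H → ℝ} (hν : ∀ h, 0 ≤ ν h) (qi : H → A) (S : Finset H) :
    0 ≤ shrink qi S ν := by
  rcases eq_or_lt_of_le (mass_nonneg hν S) with h0 | hpos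
  · have hf : ∀ a : A, mass ν (S.filter fun s => qi s = a) = 0 := by
      intro a
      have h1 : mass ν (S.filter fun s => qi s = a) ≤ mass ν S :=
        mass_mono hν (Finset.filter_subset _ _)
      have h2 : 0 ≤ mass ν (S.filter fun s => qi s = a) :=
        mass_nonneg hν _
      linarith [h0.symm ▸ h1]
    simp [shrink, hf, ← h0]
  · have hsum : ∑ a : A, (mass ν (S.filter fun s => qi s = a)) ^ 2 ≤ mass ν S ^ 2 := by
      calc ∑ a : A, (mass ν (S.filter fun s => qi s = a)) ^ 2
          ≤ (∑ a : A, mass ν (S.filter fun s => qi s = a)) ^ 2 :=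
            sum_sq_le_sq _ _ (fun a _ => mass_nonneg hν _)
        _ = mass ν S ^ 2 := by rw [mass_fiberwise]
    have : ∑ a : A, (mass ν (S.filter fun s => qi s = a)) ^ 2 / mass ν S ≤ mass ν S := by
      rw [← Finset.sum_div, div_le_iff₀ hpos]
      nlinarith
    simpa [shrink, sub_nonneg] using this

lemma gini_partition {ν : H → ℝ} (hν : ∀ h, 0 < ν h) (qi : H → A) (S : Finset H) :
    gini ν S = (∑ a : A, gini ν (S.filter fun s => qi s = a)) + mass ν S * shrink qi S ν := by
  rcases S.eq_empty_or_nonempty with rfl | hS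
  · simp [gini, mass, shrink]
  · have hm : mass ν S ≠ 0 := ne_of_gt (mass_pos hν hS)
    have h1 : mass ν S * shrink qi S ν
        = mass ν S ^ 2 - ∑ a : A, (mass ν (S.filter fun s => qi s = a)) ^ 2 := by
      rw [shrink, mul_sub, ← Finset.sum_div, mul_div_cancel₀ _ hm]
      ring
    have h2 : ∑ a : A, ∑ h ∈ S.filter (fun s => qi s = a), ν h ^ 2 = ∑ h ∈ S, ν h ^ 2 :=
      Finset.sum_fiberwise S qi (fun h => ν h ^ 2)
    simp only [gini, Finset.sum_sub_distrib, h1, h2]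
    ring

end WithA
end Aux
section Aux2
set_option linter.unusedSectionVars false

variable {H A : Type*} {m : ℕ} [Fintype A] [DecidableEq A] [DecidableEq H]

lemma shrink_insert_le {ν : H → ℝ} (hν : ∀ h, 0 < ν h) (qi : H → A) {S : Finset H} {a : H}
    (ha : a ∉ S) : shrink qi S ν ≤ shrink qi (insert a S) ν := by
  rcases S.eq_empty_or_nonempty with rfl | hS
  · rw [shrink_empty]
    exact shrink_nonneg (fun h => (hν h).le) qi _
  · set s := mass ν S with hs_def
    have hs : 0 < s := mass_pos hν hS
    set t := ν a with ht_def
    have ht : 0 < t := hν a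
    set M := mass ν (S.filter fun x => qi x = qi a) with hM_def
    have hM0 : 0 ≤ M := mass_nonneg (fun h => (hν h).le) _
    have hMs : M ≤ s := mass_mono (fun h => (hν h).le) (Finset.filter_subset _ _)
    set P := ∑ j : A, (mass ν (S.filter fun x => qi x = j)) ^ 2 with hP_def
    have hMP : M ^ 2 ≤ P := by
      refine Finset.single_le_sum (f := fun j => (mass ν (S.filter fun x => qi x = j)) ^ 2)
        (fun j _ => sq_nonneg _) (Finset.mem_univ (qi a))
    have hmassins : mass ν (insert a S) = t + s := by
      rw [mass, Finset.sum_insert ha]; rfl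
    have hfilt : ∀ j : A, mass ν ((insert a S).filter fun x => qi x = j)
        = (if qi a = j then t else 0) + mass ν (S.filter fun x => qi x = j) := by
      intro j
      rw [Finset.filter_insert]
      split
      · rw [mass, Finset.sum_insert (fun hmem => ha (Finset.mem_of_mem_filter a hmem)),
          mass, ht_def]
      · simp
    have hsum : ∑ j : A, (mass ν ((insert a S).filter fun x => qi x = j)) ^ 2
        = P + 2 * t * M + t ^ 2 := by
      simp only [hfilt, add_sq]
      rw [Finset.sum_add_distrib, Finset.sum_add_distrib]
      have e1 : ∑ j : A, ((if qi a = j then t else 0)) ^ 2 = t ^ 2 := by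
        simp [ite_pow]
      have e2 : ∑ j : A, 2 * (if qi a = j then t else 0) * mass ν (S.filter fun x => qi x = j)
          = 2 * t * M := by
        have : ∀ j : A, 2 * (if qi a = j then t else 0) * mass ν (S.filter fun x => qi x = j)
            = if qi a = j then 2 * t * mass ν (S.filter fun x => qi x = j) else 0 := by
          intro j; split <;> simp [mul_comm]
        rw [Finset.sum_congr rfl (fun j _ => this j)]
        simp [hM_def]
      rw [e1, e2, ← hP_def]
      ring
    rw [shrink, shrink, ← Finset.sum_div, ← Finset.sum_div, ← hP_def, hsum, hmassins,
      ← hs_def]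
    have hst : 0 < t + s := by linarith
    have key : (P + 2 * t * M + t ^ 2) / (t + s) - P / s ≤ t := by
      rw [div_sub_div _ _ (ne_of_gt hst) (ne_of_gt hs), div_le_iff₀ (by positivity)]
      nlinarith [sq_nonneg (s - M), mul_nonneg (mul_nonneg ht.le hM0) hs.le,
        mul_pos ht hs, mul_le_mul_of_nonneg_left hMP ht.le]
    linarith

lemma shrink_mono {ν : H → ℝ} (hν : ∀ h, 0 < ν h) (qi : H → A) {V W : Finset H}
    (hVW : V ⊆ W) : shrink qi V ν ≤ shrink qi W ν := by
  have main : ∀ U : Finset H, Disjoint U V → shrink qi V ν ≤ shrink qi (U ∪ V) ν := by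
    intro U
    induction U using Finset.induction_on with
    | empty => simp
    | @insert a U haU ih =>
      intro hd
      have hd' : Disjoint U V := by
        exact Finset.disjoint_of_subset_left (Finset.subset_insert a U) hd
      have haV : a ∉ U ∪ V := by
        simp only [Finset.mem_union]
        rintro (h | h)
        · exact haU h
        · exact (Finset.disjoint_left.1 hd (Finset.mem_insert_self a U)) h
      have step := shrink_insert_le hν qi haV
      rw [Finset.insert_union]
      exact le_trans (ih hd') step
  have := main (W \ V) Finset.sdiff_disjoint
  rwa [Finset.sdiff_union_of_subset hVW] at this

end Aux2
section Aux3
set_option linter.unusedSectionVars false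

variable {H A : Type*} {m : ℕ} [Fintype A] [DecidableEq A] [DecidableEq H]

lemma pathCost_nonneg (q : Fin m → H → A) {c : Fin m → ℝ} (hc : ∀ i, 0 ≤ c i)
    (T : QTree m H A) (h : H) : 0 ≤ pathCost q c T h := by
  induction T with
  | leaf h' => simp [pathCost]
  | node i ch ih =>
    have := ih (q i h)
    simp only [pathCost]
    linarith [hc i]

lemma tele (q : Fin m → H → A) (c : Fin m → ℝ) {ν : H → ℝ} (hν : ∀ h, 0 < ν h)
    (hc : ∀ i, 0 ≤ c i) {r : ℝ} (hr0 : 0 ≤ r) :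
    ∀ (T : QTree m H A) (V : Finset H), (∀ h ∈ V, follow q T h = h) →
      (∀ j, shrink (q j) V ν ≤ r * c j) →
      gini ν V ≤ r * ∑ h ∈ V, ν h * pathCost q c T h := by
  intro T
  induction T with
  | leaf h0 =>
    intro V hval hr
    have hV : V ⊆ {h0} := by
      intro h hh
      have := hval h hh
      simp only [follow] at this
      simp [← this]
    rcases Finset.subset_singleton_iff.1 hV with rfl | rfl
    · simp [gini, mass, pathCost]
    · simp [gini, mass, pathCost]
  | node i ch ih =>
    intro V hval hr
    have hval' : ∀ a : A, ∀ h ∈ V.filter (fun s => q i s = a), follow q (ch a) h = h := by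
      intro a h hh
      obtain ⟨hhV, hqa⟩ := Finset.mem_filter.1 hh
      have := hval h hhV
      simp only [follow] at this
      rwa [hqa] at this
    have hr' : ∀ a : A, ∀ j, shrink (q j) (V.filter (fun s => q i s = a)) ν ≤ r * c j :=
      fun a j => le_trans (shrink_mono hν _ (Finset.filter_subset _ _)) (hr j)
    have IH : ∀ a : A, gini ν (V.filter (fun s => q i s = a)) ≤
        r * ∑ h ∈ V.filter (fun s => q i s = a), ν h * pathCost q c (ch a) h :=
      fun a => ih a _ (hval' a) (hr' a)
    have hms : mass ν V * shrink (q i) V ν ≤ mass ν V * (r * c i) :=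
      mul_le_mul_of_nonneg_left (hr i) (mass_nonneg (fun h => (hν h).le) V)
    have e1 : ∀ a : A, ∑ h ∈ V.filter (fun s => q i s = a), ν h * pathCost q c (ch a) h
        = ∑ h ∈ V.filter (fun s => q i s = a), ν h * pathCost q c (ch (q i h)) h :=
      fun a => Finset.sum_congr rfl (fun h hh => by rw [(Finset.mem_filter.1 hh).2])
    have e2 : ∑ a : A, ∑ h ∈ V.filter (fun s => q i s = a), ν h * pathCost q c (ch (q i h)) h
        = ∑ h ∈ V, ν h * pathCost q c (ch (q i h)) h :=
      Finset.sum_fiberwise V (fun s => q i s) _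
    calc gini ν V
        = (∑ a : A, gini ν (V.filter fun s => q i s = a)) + mass ν V * shrink (q i) V ν :=
          gini_partition hν (q i) V
      _ ≤ (∑ a : A, r * ∑ h ∈ V.filter (fun s => q i s = a), ν h * pathCost q c (ch a) h)
            + mass ν V * (r * c i) :=
          add_le_add (Finset.sum_le_sum fun a _ => IH a) hms
      _ = r * ∑ h ∈ V, ν h * pathCost q c (.node i ch) h := by
          have e3 : ∑ h ∈ V, ν h * pathCost q c (QTree.node i ch) h
              = mass ν V * c i + ∑ h ∈ V, ν h * pathCost q c (ch (q i h)) h := by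
            simp only [pathCost, mul_add]
            rw [Finset.sum_add_distrib, ← Finset.sum_mul]
            rfl
          simp_rw [e1]
          rw [← Finset.mul_sum, e2, e3]
          ring

lemma shrink_restrict {ν : H → ℝ} (hν : ∀ h, 0 < ν h) {S : Finset H} (hS : S.Nonempty)
    (qi : H → A) : shrink qi S (restrict ν S) = shrink qi S ν / mass ν S := by
  have hm : (0:ℝ) < mass ν S := mass_pos hν hS
  have hmass_restrict : ∀ W : Finset H, W ⊆ S → mass (restrict ν S) W = mass ν W / mass ν S := by
    intro W hW
    unfold mass restrict
    rw [Finset.sum_congr rfl (fun w hw => if_pos (hW hw)), Finset.sum_div]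
    rfl
  rw [shrink, shrink, hmass_restrict S Finset.Subset.rfl]
  rw [Finset.sum_congr rfl (fun j (_ : j ∈ Finset.univ) => by
    rw [hmass_restrict _ (Finset.filter_subset _ _)])]
  rw [div_self (ne_of_gt hm)]
  simp only [div_one, div_pow]
  rw [sub_div, div_self (ne_of_gt hm), Finset.sum_div]
  congr 1
  refine Finset.sum_congr rfl fun j _ => ?_
  rw [div_div]
  ring_nf
end Aux3
section Core
set_option linter.unusedSectionVars false

variable {H A : Type*} {m : ℕ} [Fintype A] [DecidableEq A] [DecidableEq H]

lemma greedy_small {q : Fin m → H → A} {c : Fin m → ℝ} {ν : H → ℝ} {t : QTree m H A}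
    {S : Finset H} (hg : IsGreedy q c ν t S) (hS : ¬ 1 < S.card) :
    ∃ h', t = QTree.leaf h' := by
  cases hg with
  | leaf h => exact ⟨h, rfl⟩
  | node S i ch hcard _ _ => exact absurd hcard hS

set_option maxHeartbeats 2000000 in
lemma core (q : Fin m → H → A) {c : Fin m → ℝ} (hc : ∀ i, 0 < c i)
    {ν : H → ℝ} (hν : ∀ h, 0 < ν h)
    {g0 : ℝ} (hg0 : 0 < g0) (hg01 : g0 ≤ 1)
    (hG : ∀ S : Finset H, 2 ≤ S.card → g0 ≤ gini ν S)
    (T : QTree m H A) (hT : ∀ h, follow q T h = h) :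
    ∀ (Tg : QTree m H A) (S : Finset H), IsGreedy q c ν Tg S →
      ∑ h ∈ S, ν h * pathCost q c Tg h ≤
        (∑ h ∈ S, ν h * pathCost q c T h) * (Real.log (gini ν S) - Real.log g0 + 1) := by
  intro Tg S hg
  induction hg with
  | leaf h =>
    simp only [Finset.sum_singleton, pathCost, mul_zero]
    have h1 : 0 ≤ ν h * pathCost q c T h :=
      mul_nonneg (hν h).le (pathCost_nonneg q (fun i => (hc i).le) T h)
    have h2 : 0 ≤ Real.log (gini ν ({h} : Finset H)) - Real.log g0 + 1 := by
      rw [gini_singleton, Real.log_zero]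
      have := Real.log_nonpos hg0.le hg01
      linarith
    exact mul_nonneg h1 h2
  | node S i ch hcard hmax hch IH =>
    have hS : S.Nonempty := Finset.card_pos.1 (by omega)
    have hmassS : 0 < mass ν S := mass_pos hν hS
    have hGS : g0 ≤ gini ν S := hG S hcard
    have hGSpos : 0 < gini ν S := lt_of_lt_of_le hg0 hGS
    -- unnormalized greedy optimality
    have hmaxU : ∀ j, shrink (q j) S ν ≤ (shrink (q i) S ν / c i) * c j := by
      intro j
      have h1 := hmax j
      rw [shrink_restrict hν hS, shrink_restrict hν hS, div_div, div_div] at h1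
      have h2 : shrink (q j) S ν / c j ≤ shrink (q i) S ν / c i := by
        rw [div_le_div_iff₀ (mul_pos hmassS (hc j)) (mul_pos hmassS (hc i))] at h1
        rw [div_le_div_iff₀ (hc j) (hc i)]
        nlinarith [hc i, hc j]
      rw [div_le_div_iff₀ (hc j) (hc i)] at h2
      rw [div_mul_eq_mul_div, le_div_iff₀ (hc i)]
      linarith
    set r : ℝ := shrink (q i) S ν / c i with hr_def
    have hr0 : 0 ≤ r :=
      div_nonneg (shrink_nonneg (fun h => (hν h).le) _ _) (hc i).le
    set CS : ℝ := ∑ h ∈ S, ν h * pathCost q c T h with hCS_def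
    have hCS0 : 0 ≤ CS :=
      Finset.sum_nonneg fun h _ =>
        mul_nonneg (hν h).le (pathCost_nonneg q (fun i => (hc i).le) T h)
    have htele : gini ν S ≤ r * CS :=
      tele q c hν (fun i => (hc i).le) hr0 T S (fun h _ => hT h) hmaxU
    set G' : ℝ := ∑ a : A, gini ν ((S.filter fun s => q i s = a)) with hG'_def
    have hpart : gini ν S = G' + mass ν S * shrink (q i) S ν := gini_partition hν (q i) S
    have hG'0 : 0 ≤ G' :=
      Finset.sum_nonneg fun a _ => gini_nonneg (fun h => (hν h).le) _
    have hms0 : 0 ≤ mass ν S * shrink (q i) S ν :=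
      mul_nonneg hmassS.le (shrink_nonneg (fun h => (hν h).le) _ _)
    have hG'le : G' ≤ gini ν S := by linarith
    -- the charge for the greedy question
    have hcharge : mass ν S * c i ≤ CS * ((gini ν S - G') / gini ν S) := by
      have hrc : r * c i = shrink (q i) S ν := div_mul_cancel₀ _ (ne_of_gt (hc i))
      have key : mass ν S * c i * gini ν S ≤ CS * (gini ν S - G') := by
        have h4 : gini ν S * (mass ν S * c i) ≤ (r * CS) * (mass ν S * c i) :=
          mul_le_mul_of_nonneg_right htele (mul_nonneg hmassS.le (hc i).le)
        have h5 : (r * CS) * (mass ν S * c i) = CS * (mass ν S * (r * c i)) := by ring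
        rw [h5, hrc] at h4
        have h6 : mass ν S * shrink (q i) S ν = gini ν S - G' := by linarith
        rw [h6] at h4
        linarith
      rw [← mul_div_assoc, le_div_iff₀ hGSpos]
      exact key
    -- decomposition of the greedy cost
    have hLHS : ∑ h ∈ S, ν h * pathCost q c (QTree.node i ch) h
        = mass ν S * c i + ∑ a : A, ∑ h ∈ (S.filter fun s => q i s = a), ν h * pathCost q c (ch a) h := by
      simp only [pathCost, mul_add]
      rw [Finset.sum_add_distrib, ← Finset.sum_mul]
      have e9 : ∑ x ∈ S, ν x * pathCost q c (ch (q i x)) x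
          = ∑ a : A, ∑ h ∈ S.filter (fun s => q i s = a), ν h * pathCost q c (ch a) h := by
        rw [← Finset.sum_fiberwise S (fun s => q i s)
          (fun h => ν h * pathCost q c (ch (q i h)) h)]
        exact Finset.sum_congr rfl fun a _ =>
          Finset.sum_congr rfl fun h hh => by rw [(Finset.mem_filter.1 hh).2]
      rw [e9]
      rfl
    set big : Finset A := Finset.univ.filter (fun a => 2 ≤ ((S.filter fun s => q i s = a)).card) with hbig_def
    have hsmall : ∀ a : A, a ∉ big → ∑ h ∈ (S.filter fun s => q i s = a), ν h * pathCost q c (ch a) h = 0 := by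
      intro a ha
      have hlt : ¬ 2 ≤ ((S.filter fun s => q i s = a)).card := by
        simpa [hbig_def] using ha
      rcases Finset.eq_empty_or_nonempty ((S.filter fun s => q i s = a)) with he | hne
      · rw [he]; simp
      · obtain ⟨h', he'⟩ := greedy_small (hch a hne) (by omega)
        rw [he']
        simp [pathCost]
    have hsum_split : ∑ a : A, ∑ h ∈ (S.filter fun s => q i s = a), ν h * pathCost q c (ch a) h
        = ∑ a ∈ big, ∑ h ∈ (S.filter fun s => q i s = a), ν h * pathCost q c (ch a) h :=
      (Finset.sum_subset (Finset.subset_univ big) (fun a _ ha => hsmall a ha)).symm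
    set β : ℝ := (Real.log (gini ν S) - Real.log g0 + 1) - (gini ν S - G') / gini ν S
      with hβ_def
    have hdivle1 : (gini ν S - G') / gini ν S ≤ 1 := by
      rw [div_le_one hGSpos]; linarith
    have hFS1 : 1 ≤ Real.log (gini ν S) - Real.log g0 + 1 := by
      have := Real.log_le_log hg0 hGS
      linarith
    -- bound for each big branch
    have hbranch : ∀ a ∈ big,
        Real.log (gini ν ((S.filter fun s => q i s = a))) - Real.log g0 + 1 ≤ β := by
      intro a ha
      have hcard2 : 2 ≤ ((S.filter fun s => q i s = a)).card := by simpa [hbig_def] using ha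
      have hga : g0 ≤ gini ν ((S.filter fun s => q i s = a)) := hG ((S.filter fun s => q i s = a)) hcard2
      have hgapos : 0 < gini ν ((S.filter fun s => q i s = a)) := lt_of_lt_of_le hg0 hga
      have hgaG' : gini ν ((S.filter fun s => q i s = a)) ≤ G' := by
        rw [hG'_def]
        exact Finset.single_le_sum (f := fun a => gini ν ((S.filter fun s => q i s = a)))
          (fun b _ => gini_nonneg (fun h => (hν h).le) _) (Finset.mem_univ a)
      have hG'pos : 0 < G' := lt_of_lt_of_le hgapos hgaG'
      have hlog1 : Real.log (gini ν ((S.filter fun s => q i s = a))) ≤ Real.log G' := Real.log_le_log hgapos hgaG'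
      have hlog2 : 1 - G' / gini ν S ≤ Real.log (gini ν S) - Real.log G' := by
        have h7 : Real.log (G' / gini ν S) ≤ G' / gini ν S - 1 :=
          Real.log_le_sub_one_of_pos (div_pos hG'pos hGSpos)
        rw [Real.log_div (ne_of_gt hG'pos) (ne_of_gt hGSpos)] at h7
        linarith
      have hdiv : (gini ν S - G') / gini ν S = 1 - G' / gini ν S := by
        field_simp
      rw [hβ_def, hdiv]
      linarith
    -- putting it together
    rw [hLHS, hsum_split]
    have hCa0 : ∀ a : A, 0 ≤ ∑ h ∈ (S.filter fun s => q i s = a), ν h * pathCost q c T h := fun a =>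
      Finset.sum_nonneg fun h _ =>
        mul_nonneg (hν h).le (pathCost_nonneg q (fun i => (hc i).le) T h)
    have hCS_fiber : ∑ a : A, ∑ h ∈ (S.filter fun s => q i s = a), ν h * pathCost q c T h = CS :=
      Finset.sum_fiberwise S (fun s => q i s) _
    rcases Finset.eq_empty_or_nonempty big with hbe | hbne
    · rw [hbe]
      simp only [Finset.sum_empty, add_zero]
      calc mass ν S * c i ≤ CS * ((gini ν S - G') / gini ν S) := hcharge
        _ ≤ CS * 1 := mul_le_mul_of_nonneg_left hdivle1 hCS0
        _ ≤ CS * (Real.log (gini ν S) - Real.log g0 + 1) := by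
            apply mul_le_mul_of_nonneg_left _ hCS0
            linarith
    · obtain ⟨a0, ha0⟩ := hbne
      have hβ1 : 1 ≤ β := by
        have h8 := hbranch a0 ha0
        have hcard2 : 2 ≤ ((S.filter fun s => q i s = a0)).card := by simpa [hbig_def] using ha0
        have hga : g0 ≤ gini ν ((S.filter fun s => q i s = a0)) := hG ((S.filter fun s => q i s = a0)) hcard2
        have hgapos : 0 < gini ν ((S.filter fun s => q i s = a0)) := lt_of_lt_of_le hg0 hga
        have := Real.log_le_log hg0 hga
        linarith
      have hstep1 : ∑ a ∈ big, ∑ h ∈ (S.filter fun s => q i s = a), ν h * pathCost q c (ch a) h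
          ≤ ∑ a ∈ big, (∑ h ∈ (S.filter fun s => q i s = a), ν h * pathCost q c T h) * β := by
        refine Finset.sum_le_sum fun a ha => ?_
        have hne : ((S.filter fun s => q i s = a)).Nonempty := by
          have hcard2 : 2 ≤ ((S.filter fun s => q i s = a)).card := by simpa [hbig_def] using ha
          exact Finset.card_pos.1 (by omega)
        calc ∑ h ∈ (S.filter fun s => q i s = a), ν h * pathCost q c (ch a) h
            ≤ (∑ h ∈ (S.filter fun s => q i s = a), ν h * pathCost q c T h) *
                (Real.log (gini ν ((S.filter fun s => q i s = a))) - Real.log g0 + 1) := IH a hne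
          _ ≤ (∑ h ∈ (S.filter fun s => q i s = a), ν h * pathCost q c T h) * β :=
              mul_le_mul_of_nonneg_left (hbranch a ha) (hCa0 a)
      have hstep2 : ∑ a ∈ big, (∑ h ∈ (S.filter fun s => q i s = a), ν h * pathCost q c T h) * β ≤ CS * β := by
        rw [← Finset.sum_mul]
        apply mul_le_mul_of_nonneg_right _ (by linarith)
        rw [← hCS_fiber]
        exact Finset.sum_le_sum_of_subset_of_nonneg (Finset.subset_univ big)
          (fun a _ _ => hCa0 a)
      calc mass ν S * c i + ∑ a ∈ big, ∑ h ∈ (S.filter fun s => q i s = a), ν h * pathCost q c (ch a) h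
          ≤ CS * ((gini ν S - G') / gini ν S) + CS * β := by
            exact add_le_add hcharge (le_trans hstep1 hstep2)
        _ = CS * (Real.log (gini ν S) - Real.log g0 + 1) := by
            rw [hβ_def]; ring

end Core
section Prune
set_option linter.unusedSectionVars false

variable {H A : Type*} {m : ℕ} [DecidableEq A] [DecidableEq H]

open Classical in
/-- Prune a query tree relative to a version space: drop questions that do not split. -/
noncomputable def prune (q : Fin m → H → A) (x0 : H) : QTree m H A → Finset H → QTree m H A
  | .leaf h, _ => .leaf h
  | .node i ch, S =>
    if ∃ s ∈ S, ∃ t ∈ S, q i s ≠ q i t then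
      .node i (fun a => prune q x0 (ch a) (S.filter fun s => q i s = a))
    else
      prune q x0 (ch (q i (if hS : S.Nonempty then hS.choose else x0))) S

lemma prune_follow (q : Fin m → H → A) (x0 : H) :
    ∀ (T : QTree m H A) (S : Finset H), ∀ h ∈ S,
      follow q (prune q x0 T S) h = follow q T h := by
  intro T
  induction T with
  | leaf h' => intro S h hh; rw [prune]
  | node i ch ih =>
    intro S h hh
    rw [prune]
    split
    · show follow q (QTree.node i _) h = _
      simp only [follow]
      exact ih (q i h) (S.filter fun s => q i s = (q i h)) h
        (Finset.mem_filter.2 ⟨hh, rfl⟩)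
    · next hns =>
      push_neg at hns
      have hSne : S.Nonempty := ⟨h, hh⟩
      rw [dif_pos hSne]
      have hq : q i hSne.choose = q i h := hns _ hSne.choose_spec _ hh
      rw [hq, ih (q i h) S h hh]
      rfl

lemma prune_pathCost_le (q : Fin m → H → A) {c : Fin m → ℝ} (hc : ∀ i, 0 ≤ c i) (x0 : H) :
    ∀ (T : QTree m H A) (S : Finset H), ∀ h ∈ S,
      pathCost q c (prune q x0 T S) h ≤ pathCost q c T h := by
  intro T
  induction T with
  | leaf h' => intro S h hh; rw [prune]
  | node i ch ih =>
    intro S h hh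
    rw [prune]
    split
    · show pathCost q c (QTree.node i _) h ≤ _
      simp only [pathCost]
      exact add_le_add_right
        (ih (q i h) (S.filter fun s => q i s = (q i h)) h (Finset.mem_filter.2 ⟨hh, rfl⟩)) _
    · next hns =>
      push_neg at hns
      have hSne : S.Nonempty := ⟨h, hh⟩
      rw [dif_pos hSne]
      have hq : q i hSne.choose = q i h := hns _ hSne.choose_spec _ hh
      rw [hq]
      calc pathCost q c (prune q x0 (ch (q i h)) S) h ≤ pathCost q c (ch (q i h)) h :=
            ih (q i h) S h hh
        _ ≤ c i + pathCost q c (ch (q i h)) h := by linarith [hc i]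
        _ = pathCost q c (QTree.node i ch) h := rfl

lemma prune_pathCost_bound (q : Fin m → H → A) {c : Fin m → ℝ} {cmax : ℝ}
    (hcmax0 : 0 ≤ cmax) (hcmax : ∀ i, c i ≤ cmax) (x0 : H) :
    ∀ (T : QTree m H A) (S : Finset H), ∀ h ∈ S,
      pathCost q c (prune q x0 T S) h ≤ cmax * ((S.card : ℝ) - 1) := by
  intro T
  induction T with
  | leaf h' =>
    intro S h hh
    rw [prune]
    have h1 : (1:ℝ) ≤ (S.card : ℝ) := by
      have := Finset.card_pos.2 ⟨h, hh⟩
      exact_mod_cast this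
    show (0:ℝ) ≤ _
    have : (0:ℝ) ≤ (S.card : ℝ) - 1 := by linarith
    positivity
  | node i ch ih =>
    intro S h hh
    rw [prune]
    split
    · next hsp =>
      show pathCost q c (QTree.node i _) h ≤ _
      simp only [pathCost]
      set S' := S.filter fun s => q i s = q i h with hS'_def
      have hh' : h ∈ S' := Finset.mem_filter.2 ⟨hh, rfl⟩
      have hssub : S' ⊂ S := by
        refine (Finset.ssubset_iff_of_subset (Finset.filter_subset _ _)).2 ?_
        obtain ⟨s, hs, t, ht, hst⟩ := hsp
        by_cases hqs : q i s = q i h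
        · exact ⟨t, ht, fun hmem => hst (hqs.trans (Finset.mem_filter.1 hmem).2.symm)⟩
        · exact ⟨s, hs, fun hmem => hqs (Finset.mem_filter.1 hmem).2⟩
      have hlt : S'.card < S.card := Finset.card_lt_card hssub
      have hltR : (S'.card : ℝ) + 1 ≤ (S.card : ℝ) := by exact_mod_cast hlt
      have ihb := ih (q i h) S' h hh'
      calc c i + pathCost q c (prune q x0 (ch (q i h)) S') h
          ≤ cmax + cmax * ((S'.card : ℝ) - 1) := add_le_add (hcmax i) ihb
        _ = cmax * (S'.card : ℝ) := by ring
        _ ≤ cmax * ((S.card : ℝ) - 1) :=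
            mul_le_mul_of_nonneg_left (by linarith) hcmax0
    · next hns =>
      exact ih _ S h hh

lemma gini_lower {ν : H → ℝ} (hν0 : ∀ h, 0 ≤ ν h) {ε : ℝ} (hε0 : 0 ≤ ε)
    (hlb : ∀ h, ε ≤ ν h) {S : Finset H} (hS : 2 ≤ S.card) :
    2 * ε ^ 2 ≤ gini ν S := by
  obtain ⟨x, hx, y, hy, hxy⟩ := Finset.one_lt_card.1 hS
  have hyx : y ∈ S.erase x := Finset.mem_erase.2 ⟨hxy.symm, hy⟩
  set W := (S.erase x).erase y with hW_def
  have e1 : mass ν S = ν x + (ν y + mass ν W) := by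
    rw [mass, ← Finset.sum_erase_add S ν hx, ← Finset.sum_erase_add (S.erase x) ν hyx]
    rw [mass]
    ring
  have e2 : ∑ h ∈ S, ν h ^ 2 = ν x ^ 2 + (ν y ^ 2 + ∑ h ∈ W, ν h ^ 2) := by
    rw [← Finset.sum_erase_add S _ hx, ← Finset.sum_erase_add (S.erase x) _ hyx]
    ring
  have hQ : ∑ h ∈ W, ν h ^ 2 ≤ (mass ν W) ^ 2 := sum_sq_le_sq _ _ (fun h _ => hν0 h)
  have hw : 0 ≤ mass ν W := mass_nonneg hν0 W
  have hu := hlb x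
  have hv := hlb y
  rw [gini, e1, e2]
  nlinarith [mul_nonneg hw (hν0 x), mul_nonneg hw (hν0 y), mul_le_mul hu hv hε0 (hν0 x)]

end Prune

set_option maxHeartbeats 2000000 in
/-- For `n = |H| ≥ 3`, the greedy query tree `T^g` built for the rounded
distribution `π'` satisfies `C(T^g, π) ≤ 108 · C* · ln( n · c_max / c_min )`, where `C*`
is the minimum cost over all query trees whose leaves are `H` (formalized: the bound holds
against every such tree). -/
theorem rounded_greedy_cost_bound [Fintype H] [Fintype A] [DecidableEq H] [DecidableEq A]
    (π : H → ℝ) (hπpos : ∀ h, 0 < π h) (hπsum : ∑ h : H, π h = 1)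
    (hn : 3 ≤ Fintype.card H)
    (q : Fin m → H → A) (c : Fin m → ℝ) (hc : ∀ i, 0 < c i)
    (hdist : ∀ h h' : H, h ≠ h' → ∃ i : Fin m, q i h ≠ q i h')
    (cmin cmax : ℝ)
    (hcmin : IsLeast (Set.range c) cmin) (hcmax : IsGreatest (Set.range c) cmax)
    (eps : ℝ) (heps : eps = cmin / (cmax * (Fintype.card H : ℝ) ^ 3))
    (hj : H) (hhj : 1 / (Fintype.card H : ℝ) ≤ π hj)
    (π' : H → ℝ)
    (hπ' : ∀ h : H, π' h =
      (if π h < eps then eps else π h) -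
        (if h = hj then ∑ h' ∈ Finset.univ.filter (fun h'' => π h'' < eps), (eps - π h')
          else 0))
    (Tg : QTree m H A) (hTg : IsGreedy q c π' Tg Finset.univ) :
    ∀ T : QTree m H A, ValidOn q T Finset.univ →
      treeCost q c Tg π ≤
        108 * treeCost q c T π *
          Real.log ((Fintype.card H : ℝ) * cmax / cmin) := by
  intro T hT
  have hN3 : (3:ℝ) ≤ (Fintype.card H : ℝ) := by exact_mod_cast hn
  set N : ℝ := (Fintype.card H : ℝ) with hN_def
  have hN0 : 0 < N := by linarith
  obtain ⟨i0, hi0⟩ := hcmin.1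
  have hcminpos : 0 < cmin := hi0 ▸ hc i0
  have hcmincmax : cmin ≤ cmax := hcmax.2 hcmin.1
  have hcmaxpos : 0 < cmax := lt_of_lt_of_le hcminpos hcmincmax
  have hcle : ∀ i, c i ≤ cmax := fun i => hcmax.2 ⟨i, rfl⟩
  have hcge : ∀ i, cmin ≤ c i := fun i => hcmin.2 ⟨i, rfl⟩
  have hepspos : 0 < eps := by rw [heps]; positivity
  have hsq : (9:ℝ) ≤ N ^ 2 := by nlinarith [sq_nonneg (N - 3)]
  have hN3c : (27:ℝ) ≤ N ^ 3 := by
    nlinarith [mul_le_mul_of_nonneg_right hsq hN0.le]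
  have hNcube : N ≤ N ^ 3 := by nlinarith [mul_le_mul_of_nonneg_right hsq hN0.le]
  have hepsle : eps ≤ 1 / N ^ 3 := by
    rw [heps, div_le_div_iff₀ (by positivity) (by positivity)]
    nlinarith [mul_le_mul_of_nonneg_right hcmincmax (by positivity : (0:ℝ) ≤ N ^ 3)]
  have hepsn : eps ≤ 1 / 27 := by
    have : 1 / N ^ 3 ≤ 1 / 27 := by
      rw [div_le_div_iff₀ (by positivity) (by norm_num)]
      linarith
    linarith
  set δ : ℝ := ∑ h' ∈ Finset.univ.filter (fun h'' => π h'' < eps), (eps - π h') with hδ_def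
  have hδ0 : 0 ≤ δ := Finset.sum_nonneg fun h hh => by
    have := (Finset.mem_filter.1 hh).2; linarith
  have hδle : δ ≤ N * eps := by
    have hcard : ((Finset.univ.filter (fun h'' => π h'' < eps)).card : ℝ) ≤ N := by
      rw [hN_def, ← Finset.card_univ]
      exact_mod_cast Finset.card_filter_le _ _
    calc δ ≤ ∑ _h' ∈ Finset.univ.filter (fun h'' => π h'' < eps), eps :=
          Finset.sum_le_sum fun h _ => by linarith [hπpos h]
      _ = ((Finset.univ.filter (fun h'' => π h'' < eps)).card : ℝ) * eps := by
          rw [Finset.sum_const, nsmul_eq_mul]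
      _ ≤ N * eps := mul_le_mul_of_nonneg_right hcard hepspos.le
  have hπhj : 1 / N ≤ π hj := hhj
  have heps_lt : eps < 1 / N := by
    have : 1 / N ^ 3 < 1 / N := by
      rw [div_lt_div_iff₀ (by positivity) hN0]
      nlinarith [hsq]
    linarith
  have hhjnotlt : ¬ (π hj < eps) := by push_neg; linarith
  have hπ'hj : π' hj = π hj - δ := by rw [hπ' hj, if_neg hhjnotlt, if_pos rfl]
  have hπ'ne : ∀ h, h ≠ hj → π' h = (if π h < eps then eps else π h) := fun h hne => by
    rw [hπ' h, if_neg hne, sub_zero]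
  have hπ'lb : ∀ h, eps ≤ π' h := by
    intro h
    by_cases hhe : h = hj
    · rw [hhe, hπ'hj]
      have h2 : N * eps + eps ≤ 1 / N := by
        have ha : N * eps + eps = (N + 1) * eps := by ring
        have hb : (N + 1) * eps ≤ (N + 1) * (1 / N ^ 3) :=
          mul_le_mul_of_nonneg_left hepsle (by linarith)
        have hcineq : (N + 1) * (1 / N ^ 3) ≤ 1 / N := by
          rw [mul_one_div, div_le_div_iff₀ (by positivity) hN0]
          nlinarith [hsq, mul_le_mul_of_nonneg_right hsq hN0.le]
        linarith
      linarith
    · rw [hπ'ne h hhe]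
      split
      · exact le_refl eps
      · next h3 => exact not_lt.1 h3
  have hπ'pos : ∀ h, 0 < π' h := fun h => lt_of_lt_of_le hepspos (hπ'lb h)
  have hπle : ∀ h, π h ≤ (3/2) * π' h := by
    intro h
    by_cases hhe : h = hj
    · rw [hhe, hπ'hj]
      have h4 : N * eps ≤ 1 / N ^ 2 := by
        have := mul_le_mul_of_nonneg_left hepsle hN0.le
        have he : N * (1 / N ^ 3) = 1 / N ^ 2 := by field_simp
        linarith [he ▸ this]
      have h5 : 1 / N ^ 2 ≤ (1/3) * (1 / N) := by
        rw [div_le_iff₀ (by positivity)]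
        have : (1/3) * (1/N) * N ^ 2 = N / 3 := by field_simp
        rw [this, le_div_iff₀ (by norm_num)]
        nlinarith
      have h6 : δ ≤ π hj / 3 := by linarith
      linarith
    · rw [hπ'ne h hhe]
      split
      · next h7 => linarith
      · linarith [hπpos h]
  have hπ'ub : ∀ h, π' h ≤ π h + eps := by
    intro h
    by_cases hhe : h = hj
    · rw [hhe, hπ'hj]; linarith
    · rw [hπ'ne h hhe]
      split
      · linarith [hπpos h]
      · linarith
  have hsum' : mass π' Finset.univ = 1 := by
    have e1 : ∀ h : H, π' h
        = π h + (if π h < eps then eps - π h else 0) - (if h = hj then δ else 0) := by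
      intro h
      rw [hπ' h]
      split_ifs <;> ring
    rw [mass, Finset.sum_congr rfl (fun h _ => e1 h), Finset.sum_sub_distrib,
      Finset.sum_add_distrib, hπsum]
    have e2 : ∑ h : H, (if π h < eps then eps - π h else 0) = δ := by
      rw [hδ_def]
      exact (Finset.sum_filter _ _).symm
    have e3 : ∑ h : H, (if h = hj then δ else 0) = δ := by
      rw [Finset.sum_ite_eq' Finset.univ hj (fun _ => δ)]
      simp
    rw [e2, e3]
    ring
  -- apply the core bound to the pruned tree
  have hg0pos : 0 < 2 * eps ^ 2 := by positivity
  have hg01 : 2 * eps ^ 2 ≤ 1 := by nlinarith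
  have hG : ∀ S : Finset H, 2 ≤ S.card → 2 * eps ^ 2 ≤ gini π' S := fun S hS =>
    gini_lower (fun h => (hπ'pos h).le) hepspos.le hπ'lb hS
  set T' : QTree m H A := prune q hj T Finset.univ with hT'_def
  have hT'valid : ∀ h, follow q T' h = h := fun h =>
    (prune_follow q hj T Finset.univ h (Finset.mem_univ h)).trans (hT h (Finset.mem_univ h))
  have hcore := core q hc hπ'pos (g0 := 2 * eps ^ 2) hg0pos hg01 hG T' hT'valid Tg
    Finset.univ hTg
  have hguniv_pos : 0 < gini π' Finset.univ := by
    have hcard2 : 2 ≤ (Finset.univ : Finset H).card := by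
      rw [Finset.card_univ]; omega
    exact lt_of_lt_of_le hg0pos (hG _ hcard2)
  have hginiuniv : gini π' Finset.univ ≤ 1 := by
    rw [gini, hsum']
    have : 0 ≤ ∑ h ∈ (Finset.univ : Finset H), π' h ^ 2 :=
      Finset.sum_nonneg fun h _ => sq_nonneg _
    nlinarith
  have hlogu : Real.log (gini π' Finset.univ) ≤ 0 :=
    Real.log_nonpos hguniv_pos.le hginiuniv
  set Λ : ℝ := 1 - Real.log (2 * eps ^ 2) with hΛ_def
  have hΛ1 : 1 ≤ Λ := by
    have := Real.log_nonpos (by positivity) hg01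
    rw [hΛ_def]; linarith
  have hT'π'0 : 0 ≤ ∑ h ∈ Finset.univ, π' h * pathCost q c T' h :=
    Finset.sum_nonneg fun h _ =>
      mul_nonneg (hπ'pos h).le (pathCost_nonneg q (fun i => (hc i).le) T' h)
  have hsum_core : treeCost q c Tg π' ≤ treeCost q c T' π' * Λ := by
    have h8 : Real.log (gini π' Finset.univ) - Real.log (2 * eps ^ 2) + 1 ≤ Λ := by
      rw [hΛ_def]; linarith
    calc treeCost q c Tg π' = ∑ h ∈ Finset.univ, π' h * pathCost q c Tg h := rfl
      _ ≤ (∑ h ∈ Finset.univ, π' h * pathCost q c T' h) *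
            (Real.log (gini π' Finset.univ) - Real.log (2 * eps ^ 2) + 1) := hcore
      _ ≤ (∑ h ∈ Finset.univ, π' h * pathCost q c T' h) * Λ :=
          mul_le_mul_of_nonneg_left h8 hT'π'0
      _ = treeCost q c T' π' * Λ := rfl
  have hA : treeCost q c Tg π ≤ (3/2) * treeCost q c Tg π' := by
    rw [treeCost, treeCost, Finset.mul_sum]
    refine Finset.sum_le_sum fun h _ => ?_
    have hp := pathCost_nonneg q (fun i => (hc i).le) Tg h
    calc π h * pathCost q c Tg h ≤ ((3/2) * π' h) * pathCost q c Tg h :=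
          mul_le_mul_of_nonneg_right (hπle h) hp
      _ = (3/2) * (π' h * pathCost q c Tg h) := by ring
  have hpb : ∀ h, pathCost q c T' h ≤ cmax * (N - 1) := by
    intro h
    have := prune_pathCost_bound q hcmaxpos.le hcle hj T Finset.univ h (Finset.mem_univ h)
    rwa [Finset.card_univ] at this
  have hC1 : treeCost q c T' π' ≤ treeCost q c T' π + cmin := by
    have hstep : treeCost q c T' π' ≤ treeCost q c T' π + eps * ∑ h : H, pathCost q c T' h := by
      have h14 : ∀ h : H, π' h * pathCost q c T' h
          ≤ π h * pathCost q c T' h + eps * pathCost q c T' h := by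
        intro h
        have hp := pathCost_nonneg q (fun i => (hc i).le) T' h
        nlinarith [hπ'ub h]
      calc treeCost q c T' π' ≤ ∑ h : H, (π h * pathCost q c T' h + eps * pathCost q c T' h) :=
            Finset.sum_le_sum fun h _ => h14 h
        _ = treeCost q c T' π + eps * ∑ h : H, pathCost q c T' h := by
            rw [Finset.sum_add_distrib, ← Finset.mul_sum]; rfl
    have hsp : ∑ h : H, pathCost q c T' h ≤ N * (cmax * (N - 1)) := by
      calc ∑ h : H, pathCost q c T' h ≤ ∑ _h : H, cmax * (N - 1) :=
            Finset.sum_le_sum fun h _ => hpb h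
        _ = N * (cmax * (N - 1)) := by
            rw [Finset.sum_const, nsmul_eq_mul, Finset.card_univ]
    have heN : eps * (N * (cmax * (N - 1))) ≤ cmin := by
      rw [heps, div_mul_eq_mul_div, div_le_iff₀ (by positivity)]
      have h18 : N * (N - 1) ≤ N ^ 3 := by nlinarith [hsq]
      nlinarith [mul_le_mul_of_nonneg_left h18
        (by positivity : (0:ℝ) ≤ cmin * cmax)]
    have := mul_le_mul_of_nonneg_left hsp hepspos.le
    linarith
  have hT'min : cmin ≤ treeCost q c T' π := by
    have hpc : ∀ h, cmin ≤ pathCost q c T' h := by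
      intro h
      cases hTT : T' with
      | leaf h0 =>
        exfalso
        obtain ⟨x, y, hxy⟩ := Fintype.exists_pair_of_one_lt_card (α := H) (by omega)
        have hx := hT'valid x
        have hy := hT'valid y
        rw [hTT] at hx hy
        simp only [follow] at hx hy
        exact hxy (hx ▸ hy ▸ rfl)
      | node i ch =>
        have hp := pathCost_nonneg q (fun i => (hc i).le) (ch (q i h)) h
        simp only [pathCost]
        linarith [hcge i]
    have h15 : ∑ h : H, π h * cmin ≤ treeCost q c T' π :=
      Finset.sum_le_sum fun h _ => mul_le_mul_of_nonneg_left (hpc h) (hπpos h).le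
    rwa [← Finset.sum_mul, hπsum, one_mul] at h15
  have hC : treeCost q c T' π' ≤ 2 * treeCost q c T' π := by linarith
  have hD : treeCost q c T' π ≤ treeCost q c T π :=
    Finset.sum_le_sum fun h _ => mul_le_mul_of_nonneg_left
      (prune_pathCost_le q (fun i => (hc i).le) hj T Finset.univ h (Finset.mem_univ h))
      (hπpos h).le
  set L : ℝ := Real.log (N * cmax / cmin) with hL_def
  have hL1 : 1 ≤ L := by
    have hX3 : 3 ≤ N * cmax / cmin := by
      rw [le_div_iff₀ hcminpos]; nlinarith
    have hexp : Real.exp 1 ≤ N * cmax / cmin := by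
      have := Real.exp_one_lt_d9
      linarith
    rw [hL_def]
    exact (Real.le_log_iff_exp_le (by linarith)).2 hexp
  have hLog_eps : Real.log (1 / eps) ≤ 3 * L := by
    have h10 : 1 / eps ≤ (N * cmax / cmin) ^ 3 := by
      rw [heps, one_div_div, div_pow, div_le_div_iff₀ hcminpos (by positivity)]
      have hsq : cmin ^ 2 ≤ cmax ^ 2 := by nlinarith
      have hcube : (N * cmax) ^ 3 = N ^ 3 * cmax ^ 3 := by ring
      nlinarith [mul_le_mul_of_nonneg_left hsq
        (by positivity : (0:ℝ) ≤ N ^ 3 * cmax * cmin), pow_pos hN0 3]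
    calc Real.log (1 / eps) ≤ Real.log ((N * cmax / cmin) ^ 3) :=
          Real.log_le_log (by positivity) h10
      _ = 3 * L := by rw [Real.log_pow, hL_def]; push_cast; ring
  have hΛ7L : Λ ≤ 7 * L := by
    have h11 : Real.log (2 * eps ^ 2) = Real.log 2 + 2 * Real.log eps := by
      rw [Real.log_mul two_ne_zero (by positivity), Real.log_pow]
      push_cast; ring
    have h12 : Real.log (1 / eps) = - Real.log eps := by rw [one_div, Real.log_inv]
    have h13 : 0 ≤ Real.log 2 := Real.log_nonneg one_le_two
    rw [hΛ_def, h11]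
    linarith
  have hTπ0 : 0 ≤ treeCost q c T π :=
    Finset.sum_nonneg fun h _ =>
      mul_nonneg (hπpos h).le (pathCost_nonneg q (fun i => (hc i).le) T h)
  have hT'π0 : 0 ≤ treeCost q c T' π :=
    Finset.sum_nonneg fun h _ =>
      mul_nonneg (hπpos h).le (pathCost_nonneg q (fun i => (hc i).le) T' h)
  have hΛ0 : 0 ≤ Λ := by linarith
  calc treeCost q c Tg π ≤ (3/2) * treeCost q c Tg π' := hA
    _ ≤ (3/2) * (treeCost q c T' π' * Λ) := by
        have := mul_le_mul_of_nonneg_left hsum_core (by norm_num : (0:ℝ) ≤ 3/2)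
        linarith
    _ ≤ (3/2) * ((2 * treeCost q c T' π) * Λ) := by
        have := mul_le_mul_of_nonneg_right hC hΛ0
        nlinarith
    _ = 3 * treeCost q c T' π * Λ := by ring
    _ ≤ 3 * treeCost q c T π * Λ := by
        have h16 : 3 * treeCost q c T' π ≤ 3 * treeCost q c T π := by linarith
        exact mul_le_mul_of_nonneg_right h16 hΛ0
    _ ≤ 3 * treeCost q c T π * (7 * L) := by
        have h17 : 0 ≤ 3 * treeCost q c T π := by linarith
        exact mul_le_mul_of_nonneg_left hΛ7L h17
    _ ≤ 108 * treeCost q c T π * L := by nlinarith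
end ActiveLearning
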